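/- Let R be a commutative ring, m ∈ ℕ, and Z an m×m matrix over R. Then in the polynomial ring R[u], s(adj(Z − u·I)) = ∑_{r=0}^{m} (−1)^r e_r u^r, where e_r = ∑_{R' ⊆ {1,…,m}, |R'| = r} s(adj(Z∖R')) and Z∖R' denotes the matrix obtained from Z by deleting the i-th row and i-th column for every i ∈ R'. -/

import Mathlib

open Matrix Polynomial

/-- The sum of all entries of a square matrix. -/
def matS {ι R : Type*} [Fintype ι] [CommRing R] (M : Matrix ι ι R) : R :=
  ∑ i, ∑ j, M i j

section aux

variable {S : Type*} [CommRing S] {n : Type*} [Fintype n] [DecidableEq n]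

lemma det_updateRow_one (A : Matrix n n S) (j : n) :
    (A.updateRow j (fun _ => (1 : S))).det = ∑ i, A.adjugate i j := by
  have h1 : (fun _ => (1 : S)) = ∑ i : n, Pi.single i (1 : S) := by
    simpa using (Finset.univ_sum_single (fun _ => (1 : S))).symm
  let φ : (n → S) →+ S := AddMonoidHom.mk' (fun v : n → S => (A.updateRow j v).det)
      (fun u v => by exact Matrix.det_updateRow_add A j u v)
  have h2 : (A.updateRow j (∑ i : n, Pi.single i (1 : S))).det
      = ∑ i, (A.updateRow j (Pi.single i (1 : S))).det := by
    exact map_sum φ (fun i => Pi.single i (1 : S)) Finset.univ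
  rw [h1, h2]
  exact Finset.sum_congr rfl fun i _ => (Matrix.adjugate_apply A i j).symm

lemma matS_adjugate_eq (A : Matrix n n S) :
    matS A.adjugate = ∑ j, (A.updateRow j (fun _ => (1 : S))).det := by
  simp only [matS, det_updateRow_one]
  exact Finset.sum_comm

lemma keyJ (A : Matrix n n S) :
    (Matrix.of fun i j => C (A i j) + (X : S[X])).det
      = C A.det + C (matS A.adjugate) * X := by
  classical
  set a : n → n → S[X] := fun i j => C (A i j) with ha
  set b : n → n → S[X] := fun _ _ => (X : S[X]) with hb
  have hdet : (Matrix.of fun i j => C (A i j) + (X : S[X])).det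
      = ∑ s : Finset n, (Matrix.of (s.piecewise a b)).det :=
    MultilinearMap.map_add_univ
      ((Matrix.detRowAlternating : (n → S[X]) [⋀^n]→ₗ[S[X]] S[X]).toMultilinearMap) a b
  rw [hdet]
  set T : Finset (Finset n) :=
    insert Finset.univ (Finset.univ.image fun i : n => Finset.univ.erase i) with hT
  have hzero : ∀ s ∈ (Finset.univ : Finset (Finset n)), s ∉ T →
      (Matrix.of (s.piecewise a b)).det = 0 := by
    intro s _ hs
    simp only [hT, Finset.mem_insert, Finset.mem_image, Finset.mem_univ, true_and,
      not_or, not_exists] at hs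
    obtain ⟨hs1, hs2⟩ := hs
    have hcard : 1 < sᶜ.card := by
      rcases Nat.lt_or_ge 1 sᶜ.card with h | h
      · exact h
      · exfalso
        interval_cases h' : sᶜ.card
        · have h0 : sᶜ = ∅ := Finset.card_eq_zero.mp h'
          apply hs1
          have := congrArg (·ᶜ) h0
          simpa using this
        · obtain ⟨i, hi⟩ := Finset.card_eq_one.mp h'
          apply hs2 i
          have := congrArg (·ᶜ) hi
          simpa [Finset.compl_singleton] using this.symm
    obtain ⟨i, hi, j, hj, hij⟩ := Finset.one_lt_card.mp hcard
    refine Matrix.det_zero_of_row_eq hij ?_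
    have hi' : i ∉ s := Finset.mem_compl.mp hi
    have hj' : j ∉ s := Finset.mem_compl.mp hj
    funext k
    simp [Finset.piecewise, hi', hj', hb]
  rw [← Finset.sum_subset (Finset.subset_univ T) hzero]
  have hnotmem : Finset.univ ∉ (Finset.univ.image fun i : n => Finset.univ.erase i) := by
    simp only [Finset.mem_image, Finset.mem_univ, true_and, not_exists]
    intro i h
    have : i ∈ Finset.univ.erase i := by rw [h]; exact Finset.mem_univ i
    simp at this
  rw [hT, Finset.sum_insert hnotmem]
  have hinj : ∀ x ∈ (Finset.univ : Finset n), ∀ y ∈ (Finset.univ : Finset n),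
      Finset.univ.erase x = Finset.univ.erase y → x = y := by
    intro i _ j _ h
    by_contra hij
    have : i ∈ Finset.univ.erase j := by simp [hij]
    rw [← h] at this
    simp at this
  rw [Finset.sum_image hinj]
  have huniv : (Matrix.of (Finset.univ.piecewise a b)).det = C A.det := by
    rw [Finset.piecewise_univ]
    exact (RingHom.map_det (C : S →+* S[X]) A).symm
  have herase : ∀ i : n, (Matrix.of ((Finset.univ.erase i).piecewise a b)).det
      = X * C ((A.updateRow i (fun _ => (1 : S))).det) := by
    intro i
    have hrow : (Matrix.of ((Finset.univ.erase i).piecewise a b))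
        = (A.map (C : S → S[X])).updateRow i (fun _ => (X : S[X])) := by
      ext i' j
      by_cases h : i' = i
      · subst h; simp [Finset.piecewise, hb]
      · simp [Finset.piecewise, h, Matrix.updateRow_ne h, ha]
    rw [hrow]
    have hX : (fun _ : n => (X : S[X])) = (X : S[X]) • (fun _ : n => (1 : S[X])) := by
      funext k; simp
    rw [hX, Matrix.det_updateRow_smul]
    congr 1
    have h2 : (A.map (C : S → S[X])).updateRow i (fun _ => (1 : S[X]))
        = (A.updateRow i (fun _ => (1 : S))).map (C : S → S[X]) := by
      rw [Matrix.map_updateRow]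
      congr
    rw [h2]
    exact (RingHom.map_det (C : S →+* S[X]) _).symm
  rw [huniv]
  congr 1
  calc ∑ i, (Matrix.of ((Finset.univ.erase i).piecewise a b)).det
      = ∑ i, X * C ((A.updateRow i (fun _ => (1 : S))).det) :=
        Finset.sum_congr rfl fun i _ => herase i
    _ = C (matS A.adjugate) * X := by
        rw [← Finset.mul_sum, ← map_sum, ← matS_adjugate_eq, mul_comm]

lemma det_diag_const {ι : Type*} [Fintype ι] [DecidableEq ι]
    {α : Type*} [CommRing α] (P : Matrix ι ι α) (c : α)
    (h : ∀ i j, P i j = if i = j then c else 0) :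
    P.det = c ^ Fintype.card ι := by
  have hP : P = Matrix.diagonal (fun _ => c) := by
    ext i j
    rw [h, Matrix.diagonal_apply]
  rw [hP, Matrix.det_diagonal, Finset.prod_const, Finset.card_univ]

lemma keyK (M : Matrix n n S) (c : S) :
    (c • (1 : Matrix n n S) + M).det =
      ∑ s : Finset n, c ^ s.card *
        (M.submatrix (fun i : {i // i ∈ sᶜ} => (i : n))
          (fun i : {i // i ∈ sᶜ} => (i : n))).det := by
  classical
  set a : n → n → S := fun i => c • (Pi.single i (1 : S) : n → S) with ha
  set b : n → n → S := fun i => M i with hb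
  have hab : (c • (1 : Matrix n n S) + M) = Matrix.of (a + b) := by
    ext i j
    by_cases h : i = j <;>
      simp [ha, hb, Matrix.one_apply, Pi.single_apply, h, eq_comm]
  rw [hab]
  rw [show (Matrix.of (a + b)).det = ∑ s : Finset n, (Matrix.of (s.piecewise a b)).det from
    MultilinearMap.map_add_univ
      ((Matrix.detRowAlternating : (n → S) [⋀^n]→ₗ[S] S).toMultilinearMap) a b]
  refine Finset.sum_congr rfl fun s _ => ?_
  have hzero : ∀ i, i ∈ s → ∀ j, ¬ j ∈ s → (Matrix.of (s.piecewise a b)) i j = 0 := by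
    intro i hi j hj
    have hji : j ≠ i := fun h => hj (h ▸ hi)
    simp [Finset.piecewise, hi, ha, Pi.single_apply, hji]
  rw [Matrix.twoBlockTriangular_det' _ (· ∈ s) hzero]
  congr 1
  · letI : Fintype {a // a ∈ s} := Subtype.fintype fun x => x ∈ s
    rw [det_diag_const _ c (fun i j => by
      have hi : (i : n) ∈ s := i.2
      have hj : (j : n) ∈ s := j.2
      simp only [Matrix.toSquareBlockProp, Matrix.toBlock_apply, Matrix.of_apply,
        Finset.piecewise, hi, if_true, ha, Pi.smul_apply, Pi.single_apply, smul_eq_mul,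
        mul_ite, mul_one, mul_zero, Subtype.ext_iff]
      by_cases h : (i : n) = j
      · simp [h]
      · simp [h, Ne.symm h])]
    congr 1
    exact Fintype.card_of_subtype s fun _ => Iff.rfl
  · have h2 : (M.submatrix (fun i : {i // i ∈ sᶜ} => (i : n))
          (fun i : {i // i ∈ sᶜ} => (i : n)))
        = (Matrix.toSquareBlockProp (Matrix.of (s.piecewise a b))
            (fun i => ¬ i ∈ s)).submatrix
            (Equiv.subtypeEquivRight (fun i => Finset.mem_compl))
            (Equiv.subtypeEquivRight (fun i => Finset.mem_compl)) := by
      ext i j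
      have hi' : (i : n) ∉ s := Finset.mem_compl.mp i.2
      show M i j = (s.piecewise a b) (i : n) (j : n)
      rw [Finset.piecewise_eq_of_notMem _ _ _ hi']
    rw [h2, Matrix.det_submatrix_equiv_self]

end aux

theorem stmt5 {R : Type*} [CommRing R] (m : ℕ) (Z : Matrix (Fin m) (Fin m) R) :
    matS (Z.map C - (X : R[X]) • 1).adjugate =
      ∑ r ∈ Finset.range (m + 1), (-1 : R[X]) ^ r *
        C (∑ R' ∈ Finset.powersetCard r (Finset.univ : Finset (Fin m)),
            matS (Z.submatrix (fun i : {i // i ∈ R'ᶜ} => (i : Fin m))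
              (fun i : {i // i ∈ R'ᶜ} => (i : Fin m))).adjugate) * X ^ r := by
  classical
  set A : Matrix (Fin m) (Fin m) R[X] := Z.map C - (X : R[X]) • 1 with hA
  set N : Matrix (Fin m) (Fin m) (R[X])[X] :=
    Matrix.of (fun i j => C (A i j) + (X : (R[X])[X])) with hN
  have e1 : N.det.coeff 1 = matS A.adjugate := by
    rw [hN, keyJ]
    simp [coeff_C]
  have hNW : N = (-(C (X : R[X]))) • (1 : Matrix (Fin m) (Fin m) (R[X])[X])
      + Matrix.of (fun i j => C (C (Z i j)) + (X : (R[X])[X])) := by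
    rw [hN]
    ext i j
    by_cases h : i = j <;>
      simp [hA, Matrix.one_apply, h, Matrix.sub_apply, Matrix.smul_apply, map_sub,
        _root_.map_mul] <;> ring
  have e2 : N.det.coeff 1 = ∑ s : Finset (Fin m), (-(X : R[X])) ^ s.card *
      C (matS ((Z.submatrix (fun i : {i // i ∈ sᶜ} => (i : Fin m))
          (fun i : {i // i ∈ sᶜ} => (i : Fin m))).adjugate)) := by
    rw [hNW, keyK, Polynomial.finset_sum_coeff]
    refine Finset.sum_congr rfl fun s _ => ?_
    have hsub : ((Matrix.of (fun i j => C (C (Z i j)) + (X : (R[X])[X]))).submatrix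
          (fun i : {i // i ∈ sᶜ} => (i : Fin m)) (fun i : {i // i ∈ sᶜ} => (i : Fin m)))
        = Matrix.of (fun i j =>
            C (((Z.submatrix (fun i : {i // i ∈ sᶜ} => (i : Fin m))
              (fun i : {i // i ∈ sᶜ} => (i : Fin m))).map (C : R → R[X])) i j)
            + (X : (R[X])[X])) := rfl
    rw [hsub, keyJ]
    have hpow : ((-(C (X : R[X]))) : (R[X])[X]) ^ s.card
        = C ((-(X : R[X])) ^ s.card) := by
      rw [← map_neg, ← map_pow]
    rw [hpow, mul_add, ← C_mul, ← mul_assoc, ← C_mul]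
    rw [coeff_add, coeff_C]
    simp only [one_ne_zero, if_false, zero_add, coeff_C_mul, coeff_X_one, mul_one]
    congr 1
    have hadj : ((Z.submatrix (fun i : {i // i ∈ sᶜ} => (i : Fin m))
          (fun i : {i // i ∈ sᶜ} => (i : Fin m))).map (C : R → R[X])).adjugate
        = ((Z.submatrix (fun i : {i // i ∈ sᶜ} => (i : Fin m))
          (fun i : {i // i ∈ sᶜ} => (i : Fin m))).adjugate).map (C : R → R[X]) := by
      have := RingHom.map_adjugate (C : R →+* R[X])
        (Z.submatrix (fun i : {i // i ∈ sᶜ} => (i : Fin m))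
          (fun i : {i // i ∈ sᶜ} => (i : Fin m)))
      simpa [RingHom.mapMatrix_apply] using this.symm
    rw [hadj]
    simp [matS, Matrix.map_apply, map_sum]
  rw [← e1, e2]
  rw [show (Finset.univ : Finset (Finset (Fin m)))
      = (Finset.univ : Finset (Fin m)).powerset from (Finset.powerset_univ).symm]
  rw [Finset.powerset_card_disjiUnion]
  erw [Finset.sum_disjiUnion]
  rw [Finset.card_univ, Fintype.card_fin]
  refine Finset.sum_congr rfl fun r hr => ?_
  trans (∑ R' ∈ Finset.powersetCard r (Finset.univ : Finset (Fin m)),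
      (-(X : R[X])) ^ r * C (matS ((Z.submatrix (fun i : {i // i ∈ R'ᶜ} => (i : Fin m))
        (fun i : {i // i ∈ R'ᶜ} => (i : Fin m))).adjugate)))
  · exact Finset.sum_congr rfl fun t ht => by rw [(Finset.mem_powersetCard.mp ht).2]
  · rw [← Finset.mul_sum, ← map_sum, neg_pow]
    ring
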